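/- Let ρ, t, z be real numbers satisfying ρ ≥ 1, 1 − 1/ρ ≤ t ≤ 1/ρ, 1/(3ρ) ≤ t, t ≤ 0.5 + 0.5·z, and 0 ≤ z ≤ ρ·t²/3. Then √ρ + 2/√ρ + z/(2·t·√ρ) ≤ 2.4·(√(1 − t) + √(t − z) + z/(t·√(3ρ))), i.e. the ratio (√ρ + 2/√ρ + z/(2t√ρ)) / (2·(√(1 − t) + √(t − z) + z/(t·√(3ρ)))) is at most 1.2. -/
import Mathlib


set_option maxHeartbeats 1000000 in
theorem case8_bound
    (ρ t z : ℝ)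
    (hρ : ρ ≥ 1)
    (ht1 : 1 - 1 / ρ ≤ t) (ht2 : t ≤ 1 / ρ)
    (ht3 : 1 / (3 * ρ) ≤ t) (ht4 : t ≤ 0.5 + 0.5 * z)
    (hz1 : 0 ≤ z) (hz2 : z ≤ ρ * t ^ 2 / 3) :
    Real.sqrt ρ + 2 / Real.sqrt ρ + z / (2 * t * Real.sqrt ρ)
      ≤ 2.4 * (Real.sqrt (1 - t) + Real.sqrt (t - z) + z / (t * Real.sqrt (3 * ρ))) := by
  have hρ0 : (0:ℝ) < ρ := by linarith
  have ht2' : t * ρ ≤ 1 := by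
    have := (le_div_iff₀ hρ0).mp ht2; linarith
  have ht1' : (1 - t) * ρ ≤ 1 := by
    have h : 1 - t ≤ 1 / ρ := by linarith
    have := (le_div_iff₀ hρ0).mp h; linarith
  have ht3' : 1 ≤ t * (3 * ρ) := by
    have h3 : (0:ℝ) < 3 * ρ := by linarith
    have := (div_le_iff₀ h3).mp ht3; linarith
  have hρ2 : ρ ≤ 2 := by nlinarith
  have ht0 : 0 < t := by nlinarith
  have htq : 1/4 ≤ t := by nlinarith
  have hz3 : z ≤ t / 3 := by nlinarith
  have ht6 : t ≤ 3/5 := by nlinarith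
  have htz : 0 < t - z := by linarith
  have h1t : 0 < 1 - t := by linarith
  set s := Real.sqrt ρ with hs
  have hs0 : 0 < s := Real.sqrt_pos.mpr hρ0
  have hs1 : 1 ≤ s := by
    rw [hs, show (1:ℝ) = Real.sqrt 1 from (Real.sqrt_one).symm]
    exact Real.sqrt_le_sqrt hρ
  have hssq : s ^ 2 = ρ := Real.sq_sqrt (by linarith)
  have hstep1 : s + 2 / s ≤ 3 := by
    have h2 : 2 / s ≤ 3 - s := by
      rw [div_le_iff₀ hs0]
      nlinarith [sq_nonneg (s - 2)]
    linarith
  -- step B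
  have sqa : Real.sqrt (1 - t) ^ 2 = 1 - t := Real.sq_sqrt h1t.le
  have sqb : Real.sqrt (t - z) ^ 2 = t - z := Real.sq_sqrt htz.le
  have ha0 : 0 ≤ Real.sqrt (1 - t) := Real.sqrt_nonneg _
  have hb0 : 0 ≤ Real.sqrt (t - z) := Real.sqrt_nonneg _
  have hab : Real.sqrt (1 - t) * Real.sqrt (t - z) = Real.sqrt ((1 - t) * (t - z)) :=
    (Real.sqrt_mul h1t.le _).symm
  have hkey : (9/16 + z) / 2 ≤ Real.sqrt ((1 - t) * (t - z)) := by
    have h2 : ((9/16 + z) / 2) ^ 2 ≤ (1 - t) * (t - z) := by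
      nlinarith [mul_nonneg (show (0:ℝ) ≤ t - 1/4 by linarith) (show (0:ℝ) ≤ 3/5 - t by linarith),
        mul_nonneg (show (0:ℝ) ≤ t/3 - z by linarith) (show (0:ℝ) ≤ 1 - t by linarith),
        mul_nonneg (show (0:ℝ) ≤ t/3 - z by linarith) (show (0:ℝ) ≤ t/3 + z by linarith)]
    calc (9/16 + z) / 2 = Real.sqrt (((9/16 + z) / 2) ^ 2) :=
          (Real.sqrt_sq (by linarith)).symm
      _ ≤ _ := Real.sqrt_le_sqrt h2
  have hkey' : (9/16 + z) / 2 ≤ Real.sqrt (1 - t) * Real.sqrt (t - z) := by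
    rw [hab]; exact hkey
  have hB : (5/4 : ℝ) ≤ Real.sqrt (1 - t) + Real.sqrt (t - z) := by
    have expand : (Real.sqrt (1 - t) + Real.sqrt (t - z)) ^ 2
        = Real.sqrt (1 - t) ^ 2 + Real.sqrt (t - z) ^ 2
          + 2 * (Real.sqrt (1 - t) * Real.sqrt (t - z)) := by ring
    have hsum2 : (25/16 : ℝ) ≤ (Real.sqrt (1 - t) + Real.sqrt (t - z)) ^ 2 := by
      rw [expand, sqa, sqb]; linarith [hkey']
    calc (5/4 : ℝ) = Real.sqrt ((5/4) ^ 2) := (Real.sqrt_sq (by norm_num)).symm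
      _ ≤ Real.sqrt ((Real.sqrt (1 - t) + Real.sqrt (t - z)) ^ 2) :=
          Real.sqrt_le_sqrt (by linarith [hsum2])
      _ = _ := Real.sqrt_sq (by positivity)
  -- step C
  have h3ρ : Real.sqrt (3 * ρ) = Real.sqrt 3 * s := Real.sqrt_mul (by norm_num) ρ
  have h3a : Real.sqrt 3 ≤ 4.8 := by
    nlinarith [Real.sq_sqrt (show (0:ℝ) ≤ 3 by norm_num), Real.sqrt_nonneg 3]
  have h3b : 0 ≤ Real.sqrt 3 := Real.sqrt_nonneg 3
  have hC : z / (2 * t * s) ≤ 2.4 * (z / (t * Real.sqrt (3 * ρ))) := by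
    rw [h3ρ]
    have hX : 0 < t * (Real.sqrt 3 * s) := by positivity
    have hY : 0 < 2 * t * s := by positivity
    rw [show (2.4 : ℝ) * (z / (t * (Real.sqrt 3 * s))) = (2.4 * z) / (t * (Real.sqrt 3 * s)) by
      ring]
    rw [div_le_div_iff₀ hY hX]
    have key : Real.sqrt 3 * (z * (t * s)) ≤ 4.8 * (z * (t * s)) :=
      mul_le_mul_of_nonneg_right h3a (by positivity)
    nlinarith [key]
  have h3 : (3:ℝ) ≤ 2.4 * (Real.sqrt (1 - t) + Real.sqrt (t - z)) := by linarith
  linarith [hC, h3, hstep1]
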